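/- Let q be a prime power and k ≥ 2. The subspaces σ_a = {(s, a s) : s ∈ F_{q^k}} ⊆ F_{q^k}^2, for a ranging over the norm-1 elements of F_{q^k}, together with U = {(s, s^q) : s ∈ F_{q^k}}, satisfy: (i) each σ_a and U are k-dimensional F_q-subspaces of the 2k-dimensional F_q-space F_{q^k}^2; (ii) dim_{F_q}(σ_a ∩ U) = 1 for each norm-1 element a; (iii) σ_a ∩ σ_b = {0} for a ≠ b; (iv) the number of such σ_a equals (q^k−1)/(q−1), which is the maximum possible size of such a family. -/

import Mathlib

open Module Finset Polynomial

section Aux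

-- Roots bound: a finset of solutions of x^d = x has at most d elements.
lemma aux_roots {K : Type*} [Field K] {d : ℕ} (hd : 2 ≤ d) (s : Finset K)
    (h : ∀ x ∈ s, x ^ d = x) : s.card ≤ d := by
  classical
  have hdeg : (X ^ d - X : K[X]).natDegree = d := by
    rw [Polynomial.natDegree_sub_eq_left_of_natDegree_lt (by simpa using (show 1 < d by omega)),
      Polynomial.natDegree_X_pow]
  have hP : (X ^ d - X : K[X]) ≠ 0 := fun h0 => by simp [h0] at hdeg; omega
  have hsub : s ⊆ (X ^ d - X : K[X]).roots.toFinset := by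
    intro x hx
    rw [Multiset.mem_toFinset, Polynomial.mem_roots hP]
    simp [Polynomial.IsRoot, h x hx, sub_eq_zero]
  calc s.card ≤ (X ^ d - X : K[X]).roots.toFinset.card := Finset.card_le_card hsub
    _ ≤ Multiset.card (X ^ d - X : K[X]).roots := Multiset.toFinset_card_le _
    _ ≤ (X ^ d - X : K[X]).natDegree := Polynomial.card_roots' _
    _ = d := hdeg

variable {F K : Type*} [Field F] [Fintype F] [Field K] [Algebra F K] [FiniteDimensional F K]

lemma aux_fixed (x : K) (hx : x ^ Fintype.card F = x) : ∃ c : F, algebraMap F K c = x := by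
  classical
  haveI : Finite K := Module.finite_of_finite F
  haveI : Fintype K := Fintype.ofFinite K
  set q := Fintype.card F with hq
  have hq2 : 2 ≤ q := Fintype.one_lt_card
  let t : Finset K := Finset.univ.image (algebraMap F K)
  let s : Finset K := Finset.univ.filter (fun y => y ^ q = y)
  have hts : t ⊆ s := by
    intro y hy
    simp only [t, Finset.mem_image] at hy
    obtain ⟨c, -, rfl⟩ := hy
    simp only [s, Finset.mem_filter, Finset.mem_univ, true_and]
    rw [← map_pow, FiniteField.pow_card]
  have hct : t.card = q := by
    rw [Finset.card_image_of_injective _ (algebraMap F K).injective, Finset.card_univ]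
  have hcs : s.card ≤ q :=
    aux_roots hq2 s (fun y hy => (Finset.mem_filter.mp hy).2)
  have hst : t = s := Finset.eq_of_subset_of_card_le hts (by omega)
  have hxs : x ∈ s := Finset.mem_filter.mpr ⟨Finset.mem_univ _, hx⟩
  rw [← hst] at hxs
  simp only [t, Finset.mem_image] at hxs
  obtain ⟨c, -, hc⟩ := hxs
  exact ⟨c, hc⟩

lemma aux_frob : ∃ e : K ≃ₐ[F] K, ∀ x : K, e x = x ^ Fintype.card F := by
  haveI : Finite K := Module.finite_of_finite F
  obtain ⟨n, hp, hFcard⟩ := FiniteField.card F (ringChar F)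
  haveI : Fact (ringChar F).Prime := ⟨hp⟩
  haveI : CharP K (ringChar F) :=
    charP_of_injective_algebraMap (algebraMap F K).injective _
  let f : K →ₐ[F] K :=
    { toRingHom := iterateFrobenius K (ringChar F) n
      commutes' := fun c => by
        show iterateFrobenius K (ringChar F) n (algebraMap F K c) = algebraMap F K c
        rw [iterateFrobenius_def, ← map_pow, ← hFcard, FiniteField.pow_card] }
  have hfx : ∀ x : K, f x = x ^ Fintype.card F := fun x => by
    show iterateFrobenius K (ringChar F) n x = _
    rw [iterateFrobenius_def, hFcard]
  have hbij : Function.Bijective f :=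
    Finite.injective_iff_bijective.mp (f.toRingHom.injective)
  exact ⟨AlgEquiv.ofBijective f hbij, fun x => hfx x⟩


lemma aux_norm_pow (a : K) :
    algebraMap F K (Algebra.norm F a)
      = a ^ (∑ i ∈ Finset.range (finrank F K), Fintype.card F ^ i) := by
  classical
  haveI : Finite K := Module.finite_of_finite F
  haveI : Fintype K := Fintype.ofFinite K
  obtain ⟨e, he⟩ := aux_frob (F := F) (K := K)
  set q := Fintype.card F with hqdef
  have hq2 : 2 ≤ q := Fintype.one_lt_card
  set k := finrank F K with hk
  have hk0 : 0 < k := finrank_pos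
  have hepow : ∀ (i : ℕ) (x : K), (e ^ i) x = x ^ q ^ i := by
    intro i
    induction i with
    | zero => intro x; simp
    | succ i ih =>
      intro x
      rw [pow_succ, AlgEquiv.mul_apply, he, ih, ← pow_mul, pow_succ, mul_comm (q ^ i) q,
        pow_mul]
  have hcard : Fintype.card (K ≃ₐ[F] K) = k := by
    rw [← Nat.card_eq_fintype_card]; exact IsGalois.card_aut_eq_finrank F K
  have horde : orderOf e = k := by
    have hd : orderOf e ∣ k := hcard ▸ orderOf_dvd_card
    have hle : orderOf e ≤ k := Nat.le_of_dvd hk0 hd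
    have hpos : 0 < orderOf e := orderOf_pos e
    have h1 : ∀ x : K, x ^ q ^ orderOf e = x := by
      intro x
      have := congrArg (fun (σ : K ≃ₐ[F] K) => σ x) (pow_orderOf_eq_one e)
      rw [← hepow, pow_orderOf_eq_one, AlgEquiv.one_apply]
    have hcardle : Fintype.card K ≤ q ^ orderOf e := by
      have := aux_roots (d := q ^ orderOf e)
        (le_trans hq2 (Nat.le_self_pow (by omega) q))
        Finset.univ (fun x _ => h1 x)
      simpa using this
    have hcK : Fintype.card K = q ^ k := card_eq_pow_finrank
    have : q ^ k ≤ q ^ orderOf e := hcK ▸ hcardle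
    have := (pow_le_pow_iff_right₀ (by omega : 1 < q)).mp this
    omega
  have hinj : Function.Injective (fun i : Fin k => e ^ (i : ℕ)) := by
    intro i j hij
    have := pow_injOn_Iio_orderOf (x := e) (by simpa [horde] using i.isLt)
      (by simpa [horde] using j.isLt) hij
    exact Fin.ext this
  have hbij : Function.Bijective (fun i : Fin k => e ^ (i : ℕ)) :=
    (Fintype.bijective_iff_injective_and_card _).mpr ⟨hinj, by simp [hcard]⟩
  rw [Algebra.norm_eq_prod_automorphisms]
  rw [← Fintype.prod_bijective (fun i : Fin k => e ^ (i : ℕ)) hbij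
    (fun i => a ^ q ^ (i : ℕ)) (fun σ => σ a) (fun i => (hepow i a).symm)]
  rw [Finset.prod_pow_eq_pow_sum]
  congr 1
  exact Fin.sum_univ_eq_sum_range _ _

lemma aux_norm_one_iff (a : K) :
    Algebra.norm F a = 1 ↔
      a ^ (∑ i ∈ Finset.range (finrank F K), Fintype.card F ^ i) = 1 := by
  constructor
  · intro h; rw [← aux_norm_pow, h, map_one]
  · intro h
    apply (algebraMap F K).injective
    rw [aux_norm_pow, h, map_one]

lemma aux_graph_finrank (f : K →ₗ[F] K) :
    finrank F (LinearMap.graph f) = finrank F K := by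
  have h : LinearMap.range ((LinearMap.id : K →ₗ[F] K).prod f) = LinearMap.graph f := by
    ext x
    simp only [LinearMap.mem_range, LinearMap.mem_graph_iff, LinearMap.prod_apply,
      Pi.prod, LinearMap.id_apply]
    constructor
    · rintro ⟨y, rfl⟩; rfl
    · intro h; exact ⟨x.1, Prod.ext rfl h.symm⟩
  have hinj : Function.Injective ((LinearMap.id : K →ₗ[F] K).prod f) := fun x y hxy => by
    simpa using congrArg Prod.fst hxy
  rw [← h]
  exact ((LinearEquiv.ofInjective _ hinj).finrank_eq).symm


lemma aux_exists_s (a : K) (ha : Algebra.norm F a = 1) :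
    ∃ s : K, s ≠ 0 ∧ s ^ Fintype.card F = a * s := by
  classical
  haveI : Finite K := Module.finite_of_finite F
  haveI : Fintype K := Fintype.ofFinite K
  set q := Fintype.card F with hqdef
  set k := finrank F K with hk
  set m := ∑ i ∈ Finset.range k, q ^ i with hm
  have hq2 : 2 ≤ q := Fintype.one_lt_card
  have hk0 : 0 < k := finrank_pos
  have hqk : 2 ≤ q ^ k := le_trans hq2 (Nat.le_self_pow (by omega) q)
  have hmn : m * (q - 1) = q ^ k - 1 := by
    have hd : (q - 1) ∣ (q ^ k - 1) := by simpa using Nat.sub_dvd_pow_sub_pow q 1 k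
    rw [hm, Nat.geomSum_eq hq2, Nat.div_mul_cancel hd]
  have hm0 : 0 < m := by
    rcases Nat.eq_zero_or_pos m with h | h
    · rw [h, zero_mul] at hmn; omega
    · exact h
  have ha' : a ^ m = 1 := (aux_norm_one_iff a).mp ha
  have ha0 : a ≠ 0 := by
    intro h; rw [h, zero_pow hm0.ne'] at ha'; exact zero_ne_one ha'
  obtain ⟨g, hg⟩ := IsCyclic.exists_generator (α := Kˣ)
  have hordg : orderOf g = q ^ k - 1 := by
    rw [orderOf_eq_card_of_forall_mem_zpowers hg, Nat.card_units, Nat.card_eq_fintype_card, hqdef, hk,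
      card_eq_pow_finrank (K := F) (V := K)]
  set u := Units.mk0 a ha0 with hu
  obtain ⟨i, hi⟩ : ∃ i : ℕ, g ^ i = u := by
    have := hg u
    rwa [← mem_powers_iff_mem_zpowers, Submonoid.mem_powers_iff] at this
  have hum : u ^ m = 1 := Units.ext (by rw [Units.val_pow_eq_pow_val]; exact ha')
  have hdvd1 : (q ^ k - 1) ∣ i * m := by
    rw [← hordg]
    exact orderOf_dvd_of_pow_eq_one (by rw [pow_mul, hi, hum])
  have hdvd : (q - 1) ∣ i := by
    refine (Nat.mul_dvd_mul_iff_right hm0).mp ?_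
    have h2 : (q - 1) * m = q ^ k - 1 := by rw [mul_comm]; exact hmn
    rw [h2]; exact hdvd1
  obtain ⟨t, ht⟩ := hdvd
  refine ⟨((g ^ t : Kˣ) : K), Units.ne_zero _, ?_⟩
  have hs1 : ((g ^ t : Kˣ) : K) ^ (q - 1) = a := by
    have h2 : (g ^ t) ^ (q - 1) = u := by rw [← pow_mul, mul_comm t (q - 1), ← ht, hi]
    calc ((g ^ t : Kˣ) : K) ^ (q - 1) = (((g ^ t) ^ (q - 1) : Kˣ) : K) :=
          (Units.val_pow_eq_pow_val _ _).symm
      _ = (u : K) := by rw [h2]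
      _ = a := rfl
  have hq1 : q - 1 + 1 = q := by omega
  conv_lhs => rw [← hq1]
  rw [pow_succ, hs1]

lemma aux_count :
    Nat.card {a : K // Algebra.norm F a = 1}
      = ∑ i ∈ Finset.range (finrank F K), Fintype.card F ^ i := by
  classical
  haveI : Finite K := Module.finite_of_finite F
  haveI : Fintype K := Fintype.ofFinite K
  set q := Fintype.card F with hqdef
  set k := finrank F K with hk
  set m := ∑ i ∈ Finset.range k, q ^ i with hm
  have hq2 : 2 ≤ q := Fintype.one_lt_card
  have hk0 : 0 < k := finrank_pos
  have hqk : 2 ≤ q ^ k := le_trans hq2 (Nat.le_self_pow (by omega) q)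
  have hmn : m * (q - 1) = q ^ k - 1 := by
    have hd : (q - 1) ∣ (q ^ k - 1) := by simpa using Nat.sub_dvd_pow_sub_pow q 1 k
    rw [hm, Nat.geomSum_eq hq2, Nat.div_mul_cancel hd]
  have hm0 : 0 < m := by
    rcases Nat.eq_zero_or_pos m with h | h
    · rw [h, zero_mul] at hmn; omega
    · exact h
  obtain ⟨g, hg⟩ := IsCyclic.exists_generator (α := Kˣ)
  have hordg : orderOf g = q ^ k - 1 := by
    rw [orderOf_eq_card_of_forall_mem_zpowers hg, Nat.card_units, Nat.card_eq_fintype_card, hqdef, hk,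
      card_eq_pow_finrank (K := F) (V := K)]
  have hiff : ∀ x : Kˣ, x ^ m = 1 ↔ x ∈ Subgroup.zpowers (g ^ (q - 1)) := by
    intro x
    constructor
    · intro hx
      obtain ⟨i, hi⟩ : ∃ i : ℕ, g ^ i = x := by
        have := hg x
        rwa [← mem_powers_iff_mem_zpowers, Submonoid.mem_powers_iff] at this
      have hdvd1 : (q ^ k - 1) ∣ i * m := by
        rw [← hordg]
        exact orderOf_dvd_of_pow_eq_one (by rw [pow_mul, hi, hx])
      have hdvd : (q - 1) ∣ i := by
        refine (Nat.mul_dvd_mul_iff_right hm0).mp ?_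
        have h2 : (q - 1) * m = q ^ k - 1 := by rw [mul_comm]; exact hmn
        rw [h2]; exact hdvd1
      obtain ⟨t, ht⟩ := hdvd
      rw [← hi, ht, pow_mul]
      exact Subgroup.npow_mem_zpowers _ _
    · rintro ⟨t, rfl⟩
      rw [← zpow_natCast _ m, ← zpow_mul, mul_comm, zpow_mul, zpow_natCast, ← pow_mul]
      have h2 : (q - 1) * m = q ^ k - 1 := by rw [mul_comm]; exact hmn
      rw [h2, ← hordg, pow_orderOf_eq_one, one_zpow]
  set f : {x : Kˣ // x ^ m = 1} → {a : K // Algebra.norm F a = 1} :=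
    fun x => ⟨(x.1 : K), (aux_norm_one_iff _).mpr
      (by rw [← Units.val_pow_eq_pow_val, x.2, Units.val_one])⟩ with hf
  have hfb : Function.Bijective f := by
    constructor
    · intro x y hxy
      exact Subtype.ext (Units.ext (congrArg Subtype.val hxy))
    · rintro ⟨b, hb⟩
      have hb' : b ^ m = 1 := (aux_norm_one_iff b).mp hb
      have hb0 : b ≠ 0 := by
        intro h; rw [h, zero_pow hm0.ne'] at hb'; exact zero_ne_one hb'
      exact ⟨⟨Units.mk0 b hb0,
        Units.ext (by rw [Units.val_pow_eq_pow_val]; exact hb')⟩, Subtype.ext rfl⟩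
  calc Nat.card {a : K // Algebra.norm F a = 1}
      = Nat.card {x : Kˣ // x ^ m = 1} := (Nat.card_eq_of_bijective f hfb).symm
    _ = Nat.card (Subgroup.zpowers (g ^ (q - 1))) :=
        Nat.card_congr (Equiv.subtypeEquivRight hiff)
    _ = orderOf (g ^ (q - 1)) := Nat.card_zpowers _
    _ = m := by
        rw [orderOf_pow, hordg]
        have hgcd : Nat.gcd (q ^ k - 1) (q - 1) = q - 1 := Nat.gcd_eq_right
          (by simpa using Nat.sub_dvd_pow_sub_pow q 1 k)
        rw [hgcd, ← hmn, Nat.mul_div_cancel _ (by omega : 0 < q - 1)]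

lemma aux_card_sub {V : Type*} [AddCommGroup V] [Module F V] [FiniteDimensional F V]
    (W : Submodule F V) : Nat.card {w : V // w ∈ W ∧ w ≠ 0}
      = Fintype.card F ^ finrank F W - 1 := by
  classical
  haveI : Finite V := Module.finite_of_finite F
  haveI : Fintype V := Fintype.ofFinite V
  have e : {w : V // w ∈ W ∧ w ≠ 0} ≃ {w : W // ¬ (w = 0)} :=
    { toFun := fun v => ⟨⟨v.1, v.2.1⟩, fun h => v.2.2 (congrArg Subtype.val h)⟩
      invFun := fun w => ⟨w.1.1, w.1.2, fun h => w.2 (Subtype.ext h)⟩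
      left_inv := fun v => rfl
      right_inv := fun w => rfl }
  rw [Nat.card_congr e, Nat.card_eq_fintype_card, Fintype.card_subtype_compl,
    Fintype.card_subtype_eq, card_eq_pow_finrank (K := F) (V := W)]

end Aux

theorem stmt19 (F K : Type*) [Field F] [Fintype F] [Field K] [Algebra F K]
    [FiniteDimensional F K] (k : ℕ) (hk : 2 ≤ k) (hfr : finrank F K = k) :
    -- (i) the ambient space F_{q^k}² has F-dimension 2k, and U and each σ_a are
    -- k-dimensional F-subspaces
    finrank F (K × K) = 2 * k ∧
    (∃ Usub : Submodule F (K × K),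
      (Usub : Set (K × K)) = {p : K × K | p.2 = p.1 ^ Fintype.card F} ∧
      finrank F Usub = k ∧
      ∀ a : K, Algebra.norm F a = 1 →
        ∃ σ : Submodule F (K × K),
          (σ : Set (K × K)) = {p : K × K | p.2 = a * p.1} ∧
          finrank F σ = k ∧
          -- (ii) dim_F(σ_a ∩ U) = 1
          finrank F (Usub ⊓ σ : Submodule F (K × K)) = 1) ∧
    -- (iii) σ_a ∩ σ_b = {0} for a ≠ b
    (∀ a b : K, Algebra.norm F a = 1 → Algebra.norm F b = 1 → a ≠ b →
      {p : K × K | p.2 = a * p.1} ∩ {p : K × K | p.2 = b * p.1} = {0}) ∧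
    -- (iv) there are (q^k - 1)/(q - 1) norm-one elements a …
    Nat.card {a : K // Algebra.norm F a = 1} =
      (Fintype.card F ^ k - 1) / (Fintype.card F - 1) ∧
    -- … and this is the maximum possible size of such a family
    (∀ (Usub : Submodule F (K × K)),
      (Usub : Set (K × K)) = {p : K × K | p.2 = p.1 ^ Fintype.card F} →
      ∀ S : Finset (Submodule F (K × K)),
        (∀ W ∈ S, finrank F W = k ∧ W ⊓ Usub ≠ ⊥) →
        (∀ W ∈ S, ∀ W' ∈ S, W ≠ W' → W ⊓ W' = ⊥) →
        S.card ≤ (Fintype.card F ^ k - 1) / (Fintype.card F - 1)) := by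
  classical
  haveI : Finite K := Module.finite_of_finite F
  haveI : Fintype K := Fintype.ofFinite K
  obtain ⟨e, he⟩ := aux_frob (F := F) (K := K)
  have hq2 : 2 ≤ Fintype.card F := Fintype.one_lt_card
  have hUcoe : ((LinearMap.graph e.toLinearMap : Submodule F (K × K)) : Set (K × K))
      = {p : K × K | p.2 = p.1 ^ Fintype.card F} :=
    Set.ext fun p => by simp [LinearMap.mem_graph_iff, he]
  refine ⟨?_, ⟨LinearMap.graph e.toLinearMap, hUcoe, ?_, ?_⟩, ?_, ?_, ?_⟩
  · rw [Module.finrank_prod, hfr]; omega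
  · rw [aux_graph_finrank, hfr]
  · -- σ_a
    intro a ha
    have ha0 : a ≠ 0 := by
      rintro rfl
      rw [Algebra.norm_zero] at ha
      exact one_ne_zero ha.symm
    refine ⟨LinearMap.graph (LinearMap.mulLeft F a),
      Set.ext fun p => by simp [LinearMap.mem_graph_iff], ?_, ?_⟩
    · rw [aux_graph_finrank, hfr]
    · obtain ⟨s₀, hs0, hs⟩ := aux_exists_s a ha
      have hv0 : ((s₀, a * s₀) : K × K) ≠ 0 := fun h => hs0 (congrArg Prod.fst h)
      have heq : (LinearMap.graph e.toLinearMap ⊓ LinearMap.graph (LinearMap.mulLeft F a))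
          = Submodule.span F {((s₀, a * s₀) : K × K)} := by
        apply le_antisymm
        · rintro ⟨x, y⟩ hp
          obtain ⟨h1, h2⟩ := Submodule.mem_inf.mp hp
          rw [LinearMap.mem_graph_iff] at h1 h2
          simp only [AlgEquiv.toLinearMap_apply, LinearMap.mulLeft_apply] at h1 h2
          rw [he] at h1
          by_cases hx : x = 0
          · have : ((x, y) : K × K) = 0 := by simp [hx, h2]
            rw [this]; exact Submodule.zero_mem _
          · have hxq : x ^ Fintype.card F = a * x := by rw [← h1, h2]
            have hfix : (x * s₀⁻¹) ^ Fintype.card F = x * s₀⁻¹ := by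
              rw [mul_pow, hxq, inv_pow, hs]
              field_simp
            obtain ⟨c, hc⟩ := aux_fixed (F := F) (x * s₀⁻¹) hfix
            rw [Submodule.mem_span_singleton]
            refine ⟨c, ?_⟩
            have hcx : c • s₀ = x := by
              rw [Algebra.smul_def, hc]
              field_simp
            have : c • ((s₀, a * s₀) : K × K) = (c • s₀, c • (a * s₀)) := rfl
            rw [this, hcx]
            have hsnd : c • (a * s₀) = y := by
              rw [← mul_smul_comm, hcx, h2]
            rw [hsnd]
        · rw [Submodule.span_le, Set.singleton_subset_iff]
          refine Submodule.mem_inf.mpr ⟨?_, ?_⟩ <;>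
            rw [LinearMap.mem_graph_iff]
          · simp only [AlgEquiv.toLinearMap_apply]
            rw [he, hs]
          · simp
      rw [heq, finrank_span_singleton hv0]
  · -- (iii)
    intro a b _ _ hab
    ext p
    simp only [Set.mem_inter_iff, Set.mem_setOf_eq, Set.mem_singleton_iff]
    constructor
    · rintro ⟨h1, h2⟩
      have h3 : (a - b) * p.1 = 0 := by rw [sub_mul, ← h1, ← h2, sub_self]
      have h4 : p.1 = 0 := by
        rcases mul_eq_zero.mp h3 with h | h
        · exact absurd (sub_eq_zero.mp h) hab
        · exact h
      have h5 : p.2 = 0 := by rw [h1, h4, mul_zero]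
      exact Prod.ext h4 h5
    · rintro rfl
      simp
  · -- (iv)
    rw [aux_count, hfr, Nat.geomSum_eq hq2]
  · -- (v) maximality
    intro Usub hU S hS hS'
    have hUeq : Usub = LinearMap.graph e.toLinearMap :=
      SetLike.coe_injective (by rw [hU, hUcoe])
    have hUfin : finrank F Usub = k := by rw [hUeq, aux_graph_finrank, hfr]
    have hvex : ∀ W ∈ S, ∃ v : K × K, v ∈ W ⊓ Usub ∧ v ≠ 0 := by
      intro W hW
      obtain ⟨-, h2⟩ := hS W hW
      obtain ⟨v, hv1, hv2⟩ := (Submodule.ne_bot_iff _).mp h2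
      exact ⟨v, hv1, hv2⟩
    choose v hv1 hv2 using hvex
    haveI : Finite (Submodule F (K × K)) :=
      Finite.of_injective _ (SetLike.coe_injective (A := Submodule F (K × K)))
    set T : Set (Submodule F (K × K)) := {L | L ≤ Usub ∧ finrank F L = 1} with hT
    have hST : S.card ≤ Nat.card T := by
      have hmemT : ∀ (W : Submodule F (K × K)) (hW : W ∈ S),
          Submodule.span F {v W hW} ∈ T := by
        intro W hW
        constructor
        · rw [Submodule.span_le, Set.singleton_subset_iff]
          exact SetLike.mem_coe.mpr (Submodule.mem_inf.mp (hv1 W hW)).2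
        · exact finrank_span_singleton (hv2 W hW)
      set ι : {W // W ∈ S} → T := fun W => ⟨Submodule.span F {v W.1 W.2}, hmemT W.1 W.2⟩
        with hι
      have hinj : Function.Injective ι := by
        intro W W' hWW'
        by_contra hne
        have hne' : W.1 ≠ W'.1 := fun h => hne (Subtype.ext h)
        have hsp : Submodule.span F {v W.1 W.2} = Submodule.span F {v W'.1 W'.2} :=
          congrArg Subtype.val hWW'
        have h0 : v W.1 W.2 ∈ W.1 ⊓ W'.1 := by
          refine Submodule.mem_inf.mpr ⟨(Submodule.mem_inf.mp (hv1 W.1 W.2)).1, ?_⟩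
          have hmem : v W.1 W.2 ∈ Submodule.span F {v W'.1 W'.2} := by
            rw [← hsp]; exact Submodule.mem_span_singleton_self _
          have h2 : Submodule.span F {v W'.1 W'.2} ≤ W'.1 := by
            rw [Submodule.span_le, Set.singleton_subset_iff]
            exact SetLike.mem_coe.mpr (Submodule.mem_inf.mp (hv1 W'.1 W'.2)).1
          exact h2 hmem
        rw [hS' W.1 W.2 W'.1 W'.2 hne'] at h0
        exact hv2 W.1 W.2 ((Submodule.mem_bot _).mp h0)
      calc S.card = Nat.card {W // W ∈ S} := (Nat.card_eq_finsetCard S).symm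
        _ ≤ Nat.card T := Nat.card_le_card_of_injective ι hinj
    have hTcard : Nat.card T * (Fintype.card F - 1) = Fintype.card F ^ k - 1 := by
      set D := {w : K × K // w ∈ Usub ∧ w ≠ 0} with hD
      have hDcard : Nat.card D = Fintype.card F ^ k - 1 := by
        rw [hD, aux_card_sub (F := F) Usub, hUfin]
      have hπmem : ∀ d : D, Submodule.span F {d.1} ∈ T := fun d =>
        ⟨Submodule.span_le.mpr (Set.singleton_subset_iff.mpr (SetLike.mem_coe.mpr d.2.1)),
          finrank_span_singleton d.2.2⟩
      set π : D → T := fun d => ⟨Submodule.span F {d.1}, hπmem d⟩ with hπ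
      haveI : Fintype D := Fintype.ofFinite D
      haveI : Fintype T := Fintype.ofFinite T
      have hfib : ∀ L : T, Nat.card {d : D // π d = L} = Fintype.card F - 1 := by
        intro L
        have e2 : {d : D // π d = L}
            ≃ {w : K × K // w ∈ (L : Submodule F (K × K)) ∧ w ≠ 0} :=
          { toFun := fun d => ⟨d.1.1, by
              have hsp : Submodule.span F {d.1.1} = (L : Submodule F (K × K)) :=
                congrArg Subtype.val d.2
              rw [← hsp]
              exact Submodule.mem_span_singleton_self _, d.1.2.2⟩
            invFun := fun w => ⟨⟨w.1, L.2.1 w.2.1, w.2.2⟩, by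
              apply Subtype.ext
              show Submodule.span F {w.1} = (L : Submodule F (K × K))
              apply Submodule.eq_of_le_of_finrank_le
              · rw [Submodule.span_le, Set.singleton_subset_iff]
                exact SetLike.mem_coe.mpr w.2.1
              · rw [L.2.2, finrank_span_singleton w.2.2]⟩
            left_inv := fun d => Subtype.ext (Subtype.ext rfl)
            right_inv := fun w => rfl }
        rw [Nat.card_congr e2, aux_card_sub (F := F), L.2.2, pow_one]
      have hsig : Nat.card D = Nat.card T * (Fintype.card F - 1) := by
        calc Nat.card D = Fintype.card D := Nat.card_eq_fintype_card
          _ = Fintype.card (Σ L : T, {d : D // π d = L}) :=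
              (Fintype.card_congr (Equiv.sigmaFiberEquiv π)).symm
          _ = ∑ L : T, Fintype.card {d : D // π d = L} := Fintype.card_sigma
          _ = ∑ _L : T, (Fintype.card F - 1) := by
              refine Finset.sum_congr rfl (fun L _ => ?_)
              rw [← Nat.card_eq_fintype_card, hfib L]
          _ = Nat.card T * (Fintype.card F - 1) := by
              rw [Finset.sum_const, Finset.card_univ, ← Nat.card_eq_fintype_card,
                smul_eq_mul]
      rw [← hsig, hDcard]
    calc S.card ≤ Nat.card T := hST
      _ = (Fintype.card F ^ k - 1) / (Fintype.card F - 1) := by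
          rw [← hTcard, Nat.mul_div_cancel _ (by omega : 0 < Fintype.card F - 1)]
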